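/- For every ν < 0 and all reals x, the ratio R̃_ν(x) := D_{ν−1}(x)² / (D_ν(x) · D_{ν−2}(x)) satisfies 1 < R̃_ν(x) < (ν−1)/ν. -/

import Mathlib

open MeasureTheory Real Filter

noncomputable def G (ν x : ℝ) : ℝ :=
  ∫ t in Set.Ioi (0:ℝ), t ^ (-ν - 1) * Real.exp (-t^2/2 - x*t)

noncomputable def D (ν x : ℝ) : ℝ :=
  Real.exp (-x^2/4) / Real.Gamma (-ν) * G ν x

open Set Topology

noncomputable def Mi (x s : ℝ) : ℝ :=
  ∫ t in Set.Ioi (0:ℝ), t ^ s * Real.exp (-t^2/2 - x*t)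


lemma Mi_integrable (x s : ℝ) (hs : -1 < s) :
    IntegrableOn (fun t : ℝ => t ^ s * Real.exp (-t^2/2 - x*t)) (Set.Ioi 0) := by
  have hg : IntegrableOn (fun t : ℝ => Real.exp ((x-1)^2/2) * (Real.exp (-t) * t ^ s))
      (Set.Ioi 0) := by
    have := (Real.GammaIntegral_convergent (s := s + 1) (by linarith)).const_mul
      (Real.exp ((x-1)^2/2))
    simp at this; exact this
  refine hg.mono' ?_ ?_
  · refine ((ContinuousOn.rpow_const continuousOn_id ?_).mul
      (Continuous.continuousOn (by continuity))).aestronglyMeasurable measurableSet_Ioi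
    exact fun t ht => Or.inl (ne_of_gt ht)
  · filter_upwards [ae_restrict_mem measurableSet_Ioi] with t ht
    have h0 : (0:ℝ) < t := ht
    have h1 : Real.exp (-t^2/2 - x*t) ≤ Real.exp ((x-1)^2/2) * Real.exp (-t) := by
      rw [← Real.exp_add]
      exact Real.exp_le_exp.mpr (by nlinarith [sq_nonneg (t + x - 1)])
    rw [Real.norm_eq_abs, abs_of_nonneg (mul_nonneg (Real.rpow_nonneg h0.le s) (Real.exp_pos _).le)]
    have h2 := mul_le_mul_of_nonneg_left h1 (Real.rpow_nonneg h0.le s)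
    nlinarith [h2]

lemma Mi_pos (x s : ℝ) (hs : -1 < s) : 0 < Mi x s := by
  have hnn : 0 ≤ᶠ[ae (volume.restrict (Set.Ioi (0:ℝ)))]
      fun t => t ^ s * Real.exp (-t^2/2 - x*t) := by
    filter_upwards [ae_restrict_mem measurableSet_Ioi] with t ht
    exact mul_nonneg (Real.rpow_nonneg (le_of_lt ht) s) (Real.exp_pos _).le
  rw [Mi, setIntegral_pos_iff_support_of_nonneg_ae hnn (Mi_integrable x s hs)]
  refine lt_of_lt_of_le (b := volume (Set.Ioi (0:ℝ))) ?_ (measure_mono (fun t ht => ?_))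
  · rw [Real.volume_Ioi]; exact ENNReal.zero_lt_top
  · exact ⟨ne_of_gt (mul_pos (Real.rpow_pos_of_pos ht s) (Real.exp_pos _)), ht⟩

lemma Mi_CS (x s : ℝ) (hs : -1 < s) : (Mi x (s+1))^2 < Mi x s * Mi x (s+2) := by
  set w : ℝ → ℝ := fun t => Real.exp (-t^2/2 - x*t) with hw
  set f0 : ℝ → ℝ := fun t => t ^ s * w t with hf0
  set f1 : ℝ → ℝ := fun t => t ^ (s+1) * w t with hf1
  set f2 : ℝ → ℝ := fun t => t ^ (s+2) * w t with hf2
  have i0 : IntegrableOn f0 (Set.Ioi 0) := Mi_integrable x s hs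
  have i1 : IntegrableOn f1 (Set.Ioi 0) := Mi_integrable x (s+1) (by linarith)
  have i2 : IntegrableOn f2 (Set.Ioi 0) := Mi_integrable x (s+2) (by linarith)
  set μ := volume.restrict (Set.Ioi (0:ℝ)) with hμ
  set P := μ.prod μ with hP
  set h : ℝ × ℝ → ℝ := fun p =>
    f2 p.1 * f0 p.2 - 2 * (f1 p.1 * f1 p.2) + f0 p.1 * f2 p.2 with hh
  set g : ℝ × ℝ → ℝ := fun p => f0 p.1 * f0 p.2 * (p.1 - p.2)^2 with hg
  have hmem : ∀ᵐ p ∂P, p ∈ (Set.Ioi (0:ℝ)) ×ˢ (Set.Ioi (0:ℝ)) := by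
    rw [hP, hμ, Measure.prod_restrict]
    exact ae_restrict_mem (measurableSet_Ioi.prod measurableSet_Ioi)
  have hgh : g =ᶠ[ae P] h := by
    filter_upwards [hmem] with p hp
    obtain ⟨hp1, hp2⟩ := hp
    have e1 : p.1 ^ (s+1) = p.1 ^ s * p.1 := by
      rw [Real.rpow_add hp1, Real.rpow_one]
    have e2 : p.2 ^ (s+1) = p.2 ^ s * p.2 := by
      rw [Real.rpow_add hp2, Real.rpow_one]
    have e3 : p.1 ^ (s+2) = p.1 ^ s * p.1^2 := by
      rw [Real.rpow_add hp1, Real.rpow_two]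
    have e4 : p.2 ^ (s+2) = p.2 ^ s * p.2^2 := by
      rw [Real.rpow_add hp2, Real.rpow_two]
    simp only [hg, hh, hf0, hf1, hf2, e1, e2, e3, e4]
    ring
  have ih : Integrable h P :=
    (((Integrable.mul_prod i2 i0).sub ((Integrable.mul_prod i1 i1).const_mul 2)).add (Integrable.mul_prod i0 i2))
  have ig : Integrable g P := ih.congr hgh.symm
  have iA : Integrable (fun p : ℝ × ℝ => f2 p.1 * f0 p.2) P := Integrable.mul_prod i2 i0
  have iB : Integrable (fun p : ℝ × ℝ => (-2:ℝ) * (f1 p.1 * f1 p.2)) P :=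
    (Integrable.mul_prod i1 i1).const_mul (-2)
  have iC : Integrable (fun p : ℝ × ℝ => f0 p.1 * f2 p.2) P := Integrable.mul_prod i0 i2
  have hval : ∫ p, h p ∂P = Mi x (s+2) * Mi x s - 2 * ((Mi x (s+1)) * (Mi x (s+1)))
      + Mi x s * Mi x (s+2) := by
    have hsplit : ∫ p, h p ∂P =
        ∫ p, f2 p.1 * f0 p.2 + ((-2:ℝ) * (f1 p.1 * f1 p.2) + f0 p.1 * f2 p.2) ∂P := by
      congr 1; funext p; simp only [hh]; ring
    have iBC : Integrable (fun p : ℝ × ℝ => (-2:ℝ) * (f1 p.1 * f1 p.2) + f0 p.1 * f2 p.2) P :=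
      iB.add iC
    rw [hsplit, integral_add iA iBC, integral_add iB iC, integral_const_mul,
      integral_prod_mul, integral_prod_mul, integral_prod_mul]
    have m0 : ∫ t, f0 t ∂μ = Mi x s := rfl
    have m1 : ∫ t, f1 t ∂μ = Mi x (s+1) := rfl
    have m2 : ∫ t, f2 t ∂μ = Mi x (s+2) := rfl
    rw [m0, m1, m2]; ring
  have hpos : 0 < ∫ p, g p ∂P := by
    rw [integral_pos_iff_support_of_nonneg_ae ?_ ig]
    · refine lt_of_lt_of_le (b := P ((Set.Ioo (1:ℝ) 2) ×ˢ (Set.Ioo (3:ℝ) 4))) ?_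
        (measure_mono ?_)
      · rw [hP, Measure.prod_prod, hμ, Measure.restrict_apply measurableSet_Ioo,
          Measure.restrict_apply measurableSet_Ioo]
        rw [Set.Ioo_inter_Ioi, Set.Ioo_inter_Ioi]
        norm_num
      · rintro ⟨t, u⟩ ⟨ht, hu⟩
        have ht0 : (0:ℝ) < t := by cases ht; linarith
        have hu0 : (0:ℝ) < u := by cases hu; linarith
        have hne : t ≠ u := by cases ht; cases hu; intro he; linarith
        exact ne_of_gt (mul_pos
          (mul_pos (mul_pos (Real.rpow_pos_of_pos ht0 s) (Real.exp_pos _))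
            (mul_pos (Real.rpow_pos_of_pos hu0 s) (Real.exp_pos _)))
          (pow_two_pos_of_ne_zero (sub_ne_zero.mpr hne)))
    · filter_upwards [hmem] with p hp
      exact mul_nonneg (mul_nonneg
        (mul_nonneg (Real.rpow_nonneg (le_of_lt hp.1) s) (Real.exp_pos _).le)
        (mul_nonneg (Real.rpow_nonneg (le_of_lt hp.2) s) (Real.exp_pos _).le))
        (sq_nonneg _)
  rw [integral_congr_ae hgh, hval] at hpos
  nlinarith [hpos]

lemma Mi_IBP (x a : ℝ) (ha : 0 < a) : a * Mi x (a-1) = Mi x (a+1) + x * Mi x a := by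
  set w : ℝ → ℝ := fun t => Real.exp (-t^2/2 - x*t) with hw
  set F : ℝ → ℝ := fun t => t ^ a * w t with hF
  set F' : ℝ → ℝ := fun t =>
    a * (t ^ (a-1) * w t) - t ^ (a+1) * w t - x * (t ^ a * w t) with hF'
  have hderiv : ∀ t ∈ Set.Ioi (0:ℝ), HasDerivAt F (F' t) t := by
    intro t ht
    have h1 : HasDerivAt (fun u : ℝ => u ^ a) (a * t ^ (a-1)) t :=
      Real.hasDerivAt_rpow_const (Or.inl (ne_of_gt ht))
    have hu : HasDerivAt (fun u : ℝ => -u^2/2 - x*u) (-t - x) t := by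
      have : HasDerivAt (fun u : ℝ => -u^2/2 - x*u) (-(2*t^1)/2 - x*1) t := by
        exact (((hasDerivAt_pow 2 t).neg.div_const 2).sub ((hasDerivAt_id t).const_mul x))
      convert this using 1; ring
    have h2 : HasDerivAt w (Real.exp (-t^2/2 - x*t) * (-t - x)) t := hu.exp
    have h3 : HasDerivAt (fun u => u ^ a * w u) _ t := h1.mul h2
    convert h3 using 1
    have e1 : t ^ (a+1) = t ^ a * t := by rw [Real.rpow_add ht, Real.rpow_one]
    simp only [hF', hw, e1]; ring
  have hcont : ContinuousWithinAt F (Set.Ici 0) 0 := by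
    apply ContinuousAt.continuousWithinAt
    apply ContinuousAt.mul
    · exact Real.continuousAt_rpow_const 0 a (Or.inr ha.le)
    · exact (Real.continuous_exp.comp (by continuity)).continuousAt
  have htop : Tendsto F atTop (𝓝 0) := by
    have hb : Tendsto (fun t : ℝ => Real.exp ((x-1)^2/2) * (t ^ a * Real.exp (-1*t)))
        atTop (𝓝 (Real.exp ((x-1)^2/2) * 0)) :=
      (tendsto_rpow_mul_exp_neg_mul_atTop_nhds_zero a 1 one_pos).const_mul _
    rw [mul_zero] at hb
    apply squeeze_zero' (g := fun t => Real.exp ((x-1)^2/2) * (t ^ a * Real.exp (-1*t)))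
    · filter_upwards [eventually_gt_atTop (0:ℝ)] with t ht
      exact mul_nonneg (Real.rpow_nonneg ht.le a) (Real.exp_pos _).le
    · filter_upwards [eventually_gt_atTop (0:ℝ)] with t ht
      have h1 : Real.exp (-t^2/2 - x*t) ≤ Real.exp ((x-1)^2/2) * Real.exp (-1*t) := by
        rw [← Real.exp_add]
        exact Real.exp_le_exp.mpr (by nlinarith [sq_nonneg (t + x - 1)])
      have := mul_le_mul_of_nonneg_left h1 (Real.rpow_nonneg ht.le a)
      calc F t = t ^ a * Real.exp (-t^2/2 - x*t) := rfl
        _ ≤ t ^ a * (Real.exp ((x-1)^2/2) * Real.exp (-1*t)) := this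
        _ = Real.exp ((x-1)^2/2) * (t ^ a * Real.exp (-1*t)) := by ring
    · exact hb
  have i0 : IntegrableOn (fun t : ℝ => t ^ (a-1) * w t) (Set.Ioi 0) :=
    Mi_integrable x (a-1) (by linarith)
  have i1 : IntegrableOn (fun t : ℝ => t ^ a * w t) (Set.Ioi 0) :=
    Mi_integrable x a (by linarith)
  have i2 : IntegrableOn (fun t : ℝ => t ^ (a+1) * w t) (Set.Ioi 0) :=
    Mi_integrable x (a+1) (by linarith)
  have iF' : IntegrableOn F' (Set.Ioi 0) := ((i0.const_mul a).sub i2).sub (i1.const_mul x)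
  have key := integral_Ioi_of_hasDerivAt_of_tendsto hcont hderiv iF' htop
  have hF0 : F 0 = 0 := by
    simp only [hF, hw]
    rw [Real.zero_rpow (ne_of_gt ha)]; ring
  rw [hF0, sub_zero] at key
  have hsplit : ∫ t in Set.Ioi (0:ℝ), F' t =
      a * Mi x (a-1) - Mi x (a+1) - x * Mi x a := by
    have h1 : IntegrableOn (fun t : ℝ => a*(t^(a-1)*w t)) (Set.Ioi 0) := i0.const_mul a
    have h2 : IntegrableOn (fun t : ℝ => (-1:ℝ)*(t^(a+1)*w t)) (Set.Ioi 0) := i2.const_mul (-1)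
    have h3 : IntegrableOn (fun t : ℝ => (-x)*(t^a*w t)) (Set.Ioi 0) := i1.const_mul (-x)
    have h23 : IntegrableOn (fun t : ℝ => (-1:ℝ)*(t^(a+1)*w t) + (-x)*(t^a*w t)) (Set.Ioi 0) :=
      h2.add h3
    have hre : ∫ t in Set.Ioi (0:ℝ), F' t = ∫ t in Set.Ioi (0:ℝ),
        (a*(t^(a-1)*w t) + ((-1:ℝ)*(t^(a+1)*w t) + (-x)*(t^a*w t))) := by
      congr 1; funext t; simp only [hF']; ring
    rw [hre, integral_add h1 h23, integral_add h2 h3, integral_const_mul, integral_const_mul,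
      integral_const_mul]
    have m0 : ∫ t in Set.Ioi (0:ℝ), t ^ (a-1) * w t = Mi x (a-1) := rfl
    have m1 : ∫ t in Set.Ioi (0:ℝ), t ^ a * w t = Mi x a := rfl
    have m2 : ∫ t in Set.Ioi (0:ℝ), t ^ (a+1) * w t = Mi x (a+1) := rfl
    rw [m0, m1, m2]; ring
  rw [hsplit] at key
  linarith

theorem stmt7 (ν : ℝ) (hν : ν < 0) (x : ℝ) :
    1 < (D (ν - 1) x) ^ 2 / (D ν x * D (ν - 2) x) ∧
      (D (ν - 1) x) ^ 2 / (D ν x * D (ν - 2) x) < (ν - 1) / ν := by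
  have hb : (0:ℝ) < -ν := by linarith
  have eG0 : G ν x = Mi x (-ν-1) := rfl
  have eG1 : G (ν-1) x = Mi x (-ν) := by
    rw [show (-ν : ℝ) = -(ν-1)-1 by ring]; rfl
  have eG2 : G (ν-2) x = Mi x (-ν+1) := by
    rw [show (-ν+1 : ℝ) = -(ν-2)-1 by ring]; rfl
  have p0 : 0 < Mi x (-ν-1) := Mi_pos x (-ν-1) (by linarith)
  have p1 : 0 < Mi x (-ν) := Mi_pos x (-ν) (by linarith)
  have p2 : 0 < Mi x (-ν+1) := Mi_pos x (-ν+1) (by linarith)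
  have p3 : 0 < Mi x (-ν+2) := Mi_pos x (-ν+2) (by linarith)
  have cs1 : (Mi x (-ν))^2 < Mi x (-ν-1) * Mi x (-ν+1) := by
    have h := Mi_CS x (-ν-1) (by linarith)
    rw [show (-ν-1+1 : ℝ) = -ν by ring, show (-ν-1+2 : ℝ) = -ν+1 by ring] at h
    exact h
  have cs2 : (Mi x (-ν+1))^2 < Mi x (-ν) * Mi x (-ν+2) := by
    have h := Mi_CS x (-ν) (by linarith)
    rw [show (-ν+2 : ℝ) = -ν+2 by ring] at h
    exact h
  have ibp1 : (-ν) * Mi x (-ν-1) = Mi x (-ν+1) + x * Mi x (-ν) := by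
    have h := Mi_IBP x (-ν) hb
    rw [show (-ν+1 : ℝ) = -ν+1 by ring] at h
    exact h
  have ibp2 : (-ν+1) * Mi x (-ν) = Mi x (-ν+2) + x * Mi x (-ν+1) := by
    have h := Mi_IBP x (-ν+1) (by linarith)
    rw [show (-ν+1-1 : ℝ) = -ν by ring, show (-ν+1+1 : ℝ) = -ν+2 by ring] at h
    exact h
  have g1 : Real.Gamma (-(ν-1)) = (-ν) * Real.Gamma (-ν) := by
    rw [show (-(ν-1) : ℝ) = -ν+1 by ring]; exact Real.Gamma_add_one hb.ne'
  have g1' : Real.Gamma (-ν+1) = (-ν) * Real.Gamma (-ν) := Real.Gamma_add_one hb.ne'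
  have g2 : Real.Gamma (-(ν-2)) = (-ν+1) * ((-ν) * Real.Gamma (-ν)) := by
    rw [show (-(ν-2) : ℝ) = (-ν+1)+1 by ring,
      Real.Gamma_add_one (ne_of_gt (by linarith : (0:ℝ) < -ν+1)), g1']
  have hG : 0 < Real.Gamma (-ν) := Real.Gamma_pos_of_pos hb
  have hc : 0 < Real.exp (-x^2/4) := Real.exp_pos _
  have hratio : (D (ν - 1) x) ^ 2 / (D ν x * D (ν - 2) x) =
      ((-ν+1)/(-ν)) * ((Mi x (-ν))^2/(Mi x (-ν-1) * Mi x (-ν+1))) := by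
    have hν0 : ν ≠ 0 := by linarith
    simp only [D, eG0, eG1, eG2, g1, g2]
    set c := Real.exp (-x^2/4) with hcc
    set Γ := Real.Gamma (-ν) with hΓΓ
    set m0 := Mi x (-ν-1) with hm0
    set m1 := Mi x (-ν) with hm1
    set m2 := Mi x (-ν+1) with hm2
    have hcne : c ≠ 0 := hc.ne'
    have hΓne : Γ ≠ 0 := hG.ne'
    field_simp [p0.ne', p1.ne', p2.ne']
  have key : (-ν)*(Mi x (-ν-1) * Mi x (-ν+1)) < (-ν+1)*(Mi x (-ν))^2 := by
    calc (-ν)*(Mi x (-ν-1) * Mi x (-ν+1)) = ((-ν)*Mi x (-ν-1))*Mi x (-ν+1) := by ring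
      _ = (Mi x (-ν+1) + x * Mi x (-ν))*Mi x (-ν+1) := by rw [ibp1]
      _ = (Mi x (-ν+1))^2 + x*(Mi x (-ν)*Mi x (-ν+1)) := by ring
      _ < Mi x (-ν)*Mi x (-ν+2) + x*(Mi x (-ν)*Mi x (-ν+1)) := by linarith [cs2]
      _ = Mi x (-ν)*(Mi x (-ν+2) + x*Mi x (-ν+1)) := by ring
      _ = Mi x (-ν)*((-ν+1) * Mi x (-ν)) := by rw [ibp2]
      _ = (-ν+1)*(Mi x (-ν))^2 := by ring
  constructor
  · rw [hratio, div_mul_div_comm, lt_div_iff₀ (by positivity), one_mul]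
    exact key
  · rw [hratio, show (ν-1)/ν = (-ν+1)/(-ν) by rw [show (-ν+1 : ℝ) = -(ν-1) by ring, neg_div_neg_eq]]
    have h1 : (Mi x (-ν))^2/(Mi x (-ν-1) * Mi x (-ν+1)) < 1 :=
      (div_lt_one (by positivity)).mpr cs1
    calc ((-ν+1)/(-ν)) * ((Mi x (-ν))^2/(Mi x (-ν-1) * Mi x (-ν+1)))
        < ((-ν+1)/(-ν)) * 1 := by
          exact mul_lt_mul_of_pos_left h1 (by positivity)
      _ = (-ν+1)/(-ν) := mul_one _
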